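/- Let ε > 0 and λ > 0 with √λ > ε. Then: for every z ∈ [0, 2√λ − ε], the function q_{λ,z}(x) = (1/(2λ))(x − z)² + log(1 + |x|/ε) is increasing on [0, ∞); for every z ∈ [2√λ − ε, λ/ε], q_{λ,z} is increasing on [0, r₁(z)], decreasing on [r₁(z), r₂(z)], and increasing on [r₂(z), ∞); and for every z ∈ [λ/ε, ∞), q_{λ,z} is decreasing on [0, r₂(z)] and increasing on [r₂(z), ∞). -/

import Mathlib

open Real Filter

/-- The scalar log-sum penalty `g(w) = log(1 + |w|/ε)`. -/
noncomputable def logpen (ε : ℝ) (w : ℝ) : ℝ := Real.log (1 + |w| / ε)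

/-- The objective `q_{λ,z}(x) = (1/(2λ))(x − z)² + g(x)`. -/
noncomputable def qfun (lam ε z x : ℝ) : ℝ :=
  1 / (2 * lam) * (x - z) ^ 2 + logpen ε x

/-- The proximity operator of `λ g` at `z`: the set of global minimizers of `q_{λ,z}`. -/
def prox (lam ε z : ℝ) : Set ℝ := {x | ∀ y : ℝ, qfun lam ε z x ≤ qfun lam ε z y}

/-- `r₁(z) = (z − ε)/2 − √((z + ε)²/4 − λ)`. -/
noncomputable def r1 (lam ε z : ℝ) : ℝ :=
  (z - ε) / 2 - Real.sqrt ((z + ε) ^ 2 / 4 - lam)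

/-- `r₂(z) = (z − ε)/2 + √((z + ε)²/4 − λ)`. -/
noncomputable def r2 (lam ε z : ℝ) : ℝ :=
  (z - ε) / 2 + Real.sqrt ((z + ε) ^ 2 / 4 - lam)

/-- `r(z) = q_{λ,z}(r₂(z)) − q_{λ,z}(0)`. -/
noncomputable def rfun (lam ε z : ℝ) : ℝ :=
  qfun lam ε z (r2 lam ε z) - qfun lam ε z 0

/-- The iteratively reweighted ℓ₁ iteration for `prox_{λ g}(z)`. -/
def IterRW (lam ε z : ℝ) (x : ℕ → ℝ) : Prop :=
  ∀ k : ℕ, x (k + 1) =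
    if |z| ≤ lam / (ε + |x k|) then 0
    else Real.sign z * (|z| - lam / (ε + |x k|))

lemma qfun_continuous {lam ε z : ℝ} (hε : 0 < ε) : Continuous (qfun lam ε z) := by
  unfold qfun logpen
  have h1 : Continuous fun x : ℝ => 1 + |x| / ε :=
    continuous_const.add (continuous_abs.div_const ε)
  exact (continuous_const.mul ((continuous_id.sub continuous_const).pow 2)).add
    (h1.log fun x => by positivity)

lemma qfun_hasDerivAt {lam ε z : ℝ} (hε : 0 < ε) (hlam : 0 < lam) {x : ℝ} (hx : 0 < x) :
    HasDerivAt (qfun lam ε z) ((x - z) / lam + 1 / (ε + x)) x := by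
  have hne : 1 + x / ε ≠ 0 := by positivity
  have h2 : HasDerivAt (fun y : ℝ => 1 + y / ε) (1 / ε) x := by
    simpa using ((hasDerivAt_id x).div_const ε).const_add 1
  have hq : HasDerivAt (fun y : ℝ => 1 / (2 * lam) * (y - z) ^ 2 + Real.log (1 + y / ε))
      (1 / (2 * lam) * (2 * (x - z) ^ 1 * 1) + 1 / ε / (1 + x / ε)) x := by
    exact ((((hasDerivAt_id x).sub_const z).pow 2).const_mul _).add (h2.log hne)
  have heq : qfun lam ε z =ᶠ[nhds x]
      fun y : ℝ => 1 / (2 * lam) * (y - z) ^ 2 + Real.log (1 + y / ε) := by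
    filter_upwards [Ioi_mem_nhds hx] with y hy
    simp [qfun, logpen, abs_of_pos (Set.mem_Ioi.mp hy)]
  have := hq.congr_of_eventuallyEq heq
  refine this.congr_deriv ?_
  have h1 : ε + x ≠ 0 := by positivity
  have h2 : (2 : ℝ) * lam ≠ 0 := by positivity
  congr 1
  · have : lam ≠ 0 := ne_of_gt hlam
    field_simp
  · rw [div_div, show ε * (1 + x / ε) = ε + x from by field_simp]

lemma qfun_deriv {lam ε z : ℝ} (hε : 0 < ε) (hlam : 0 < lam) {x : ℝ} (hx : 0 < x) :
    deriv (qfun lam ε z) x = ((x - z) * (x + ε) + lam) / (lam * (ε + x)) := by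
  rw [(qfun_hasDerivAt hε hlam hx).deriv]
  have h1 : ε + x ≠ 0 := by positivity
  rw [div_add_div _ _ (ne_of_gt hlam) h1]
  ring_nf

lemma factor {lam ε z : ℝ} (hD : 0 ≤ (z + ε) ^ 2 / 4 - lam) (x : ℝ) :
    (x - z) * (x + ε) + lam = (x - r1 lam ε z) * (x - r2 lam ε z) := by
  unfold r1 r2
  linear_combination Real.sq_sqrt hD

lemma strictMonoOn_qfun {lam ε z : ℝ} (hε : 0 < ε) (hlam : 0 < lam) {s : Set ℝ}
    (hconv : Convex ℝ s) (hsub : s ⊆ Set.Ici 0)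
    (hpos : ∀ x ∈ interior s, 0 < (x - z) * (x + ε) + lam) :
    StrictMonoOn (qfun lam ε z) s := by
  apply strictMonoOn_of_deriv_pos hconv (qfun_continuous hε).continuousOn
  intro x hx
  have hx0 : 0 < x := by
    have := interior_mono hsub hx
    rwa [interior_Ici, Set.mem_Ioi] at this
  rw [qfun_deriv hε hlam hx0]
  exact div_pos (hpos x hx) (mul_pos hlam (by linarith))

lemma strictAntiOn_qfun {lam ε z : ℝ} (hε : 0 < ε) (hlam : 0 < lam) {s : Set ℝ}
    (hconv : Convex ℝ s) (hsub : s ⊆ Set.Ici 0)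
    (hneg : ∀ x ∈ interior s, (x - z) * (x + ε) + lam < 0) :
    StrictAntiOn (qfun lam ε z) s := by
  apply strictAntiOn_of_deriv_neg hconv (qfun_continuous hε).continuousOn
  intro x hx
  have hx0 : 0 < x := by
    have := interior_mono hsub hx
    rwa [interior_Ici, Set.mem_Ioi] at this
  rw [qfun_deriv hε hlam hx0]
  exact div_neg_of_neg_of_pos (hneg x hx) (mul_pos hlam (by linarith))

lemma strictMonoOn_glue {f : ℝ → ℝ} {a b : ℝ} (hab : a ≤ b)
    (h1 : StrictMonoOn f (Set.Icc a b)) (h2 : StrictMonoOn f (Set.Ici b)) :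
    StrictMonoOn f (Set.Ici a) := by
  intro x hx y hy hxy
  simp only [Set.mem_Ici] at hx hy
  rcases le_total y b with hyb | hby
  · exact h1 ⟨hx, hxy.le.trans hyb⟩ ⟨hy, hyb⟩ hxy
  · rcases le_total b x with hbx | hxb
    · exact h2 hbx (hbx.trans hxy.le) hxy
    · rcases eq_or_lt_of_le hxb with rfl | hxb'
      · exact h2 Set.self_mem_Ici hby hxy
      · calc f x < f b := h1 ⟨hx, hxb⟩ ⟨hab, le_rfl⟩ hxb'
          _ ≤ f y := by
            rcases eq_or_lt_of_le hby with rfl | hby'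
            · exact le_rfl
            · exact (h2 Set.self_mem_Ici hby hby').le

lemma part2_lemma {ε lam : ℝ} (hε : 0 < ε) (hlam : 0 < lam) (h : ε < Real.sqrt lam)
    {z : ℝ} (hz1 : 2 * Real.sqrt lam - ε ≤ z) (hz2 : z ≤ lam / ε) :
    StrictMonoOn (qfun lam ε z) (Set.Icc 0 (r1 lam ε z)) ∧
    StrictAntiOn (qfun lam ε z) (Set.Icc (r1 lam ε z) (r2 lam ε z)) ∧
    StrictMonoOn (qfun lam ε z) (Set.Ici (r2 lam ε z)) := by
  have hs0 : 0 < Real.sqrt lam := lt_trans hε h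
  have hs2 : Real.sqrt lam ^ 2 = lam := Real.sq_sqrt hlam.le
  have hεz : ε < z := by linarith
  have hD : 0 ≤ (z + ε) ^ 2 / 4 - lam := by nlinarith
  have hσ2 : Real.sqrt ((z + ε) ^ 2 / 4 - lam) ^ 2 = (z + ε) ^ 2 / 4 - lam :=
    Real.sq_sqrt hD
  have hσ0 : 0 ≤ Real.sqrt ((z + ε) ^ 2 / 4 - lam) := Real.sqrt_nonneg _
  have hεzlam : z * ε ≤ lam := (le_div_iff₀ hε).mp hz2
  have hσle : Real.sqrt ((z + ε) ^ 2 / 4 - lam) ≤ (z - ε) / 2 := by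
    have h1 : (z + ε) ^ 2 / 4 - lam ≤ ((z - ε) / 2) ^ 2 := by nlinarith
    calc Real.sqrt ((z + ε) ^ 2 / 4 - lam) ≤ Real.sqrt (((z - ε) / 2) ^ 2) :=
          Real.sqrt_le_sqrt h1
      _ = (z - ε) / 2 := Real.sqrt_sq (by linarith)
  have hr10 : 0 ≤ r1 lam ε z := by unfold r1; linarith
  have hr12 : r1 lam ε z ≤ r2 lam ε z := by unfold r1 r2; linarith
  refine ⟨?_, ?_, ?_⟩
  · apply strictMonoOn_qfun hε hlam (convex_Icc _ _) Set.Icc_subset_Ici_self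
    intro x hx
    rw [interior_Icc] at hx
    rw [factor hD]
    exact mul_pos_of_neg_of_neg (by linarith [hx.2]) (by linarith [hx.2])
  · apply strictAntiOn_qfun hε hlam (convex_Icc _ _)
      (fun x hx => le_trans hr10 hx.1)
    intro x hx
    rw [interior_Icc] at hx
    rw [factor hD]
    exact mul_neg_of_pos_of_neg (by linarith [hx.1]) (by linarith [hx.2])
  · apply strictMonoOn_qfun hε hlam (convex_Ici _)
      (Set.Ici_subset_Ici.mpr (hr10.trans hr12))
    intro x hx
    rw [interior_Ici] at hx
    rw [factor hD]
    exact mul_pos (by linarith [Set.mem_Ioi.mp hx]) (by linarith [Set.mem_Ioi.mp hx])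

lemma part3_lemma {ε lam : ℝ} (hε : 0 < ε) (hlam : 0 < lam) (h : ε < Real.sqrt lam)
    {z : ℝ} (hz : lam / ε ≤ z) :
    StrictAntiOn (qfun lam ε z) (Set.Icc 0 (r2 lam ε z)) ∧
    StrictMonoOn (qfun lam ε z) (Set.Ici (r2 lam ε z)) := by
  have hs0 : 0 < Real.sqrt lam := lt_trans hε h
  have hs2 : Real.sqrt lam ^ 2 = lam := Real.sq_sqrt hlam.le
  have hε2 : ε ^ 2 < lam := by nlinarith
  have hεz : ε < z := by
    have : ε < lam / ε := (lt_div_iff₀ hε).mpr (by nlinarith)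
    linarith
  have hεzlam : lam ≤ z * ε := by
    have := (div_le_iff₀ hε).mp hz
    linarith
  have hD : 0 ≤ (z + ε) ^ 2 / 4 - lam := by nlinarith [sq_nonneg (z - ε)]
  have hσ2 : Real.sqrt ((z + ε) ^ 2 / 4 - lam) ^ 2 = (z + ε) ^ 2 / 4 - lam :=
    Real.sq_sqrt hD
  have hσ0 : 0 ≤ Real.sqrt ((z + ε) ^ 2 / 4 - lam) := Real.sqrt_nonneg _
  have hσge : (z - ε) / 2 ≤ Real.sqrt ((z + ε) ^ 2 / 4 - lam) := by
    have h1 : ((z - ε) / 2) ^ 2 ≤ (z + ε) ^ 2 / 4 - lam := by nlinarith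
    calc (z - ε) / 2 = Real.sqrt (((z - ε) / 2) ^ 2) :=
          (Real.sqrt_sq (by linarith)).symm
      _ ≤ Real.sqrt ((z + ε) ^ 2 / 4 - lam) := Real.sqrt_le_sqrt h1
  have hr10 : r1 lam ε z ≤ 0 := by unfold r1; linarith
  have hr20 : 0 ≤ r2 lam ε z := by unfold r2; linarith
  have hr12 : r1 lam ε z ≤ r2 lam ε z := by unfold r1 r2; linarith
  constructor
  · apply strictAntiOn_qfun hε hlam (convex_Icc _ _) Set.Icc_subset_Ici_self
    intro x hx
    rw [interior_Icc] at hx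
    rw [factor hD]
    exact mul_neg_of_pos_of_neg (by linarith [hx.1]) (by linarith [hx.2])
  · apply strictMonoOn_qfun hε hlam (convex_Ici _) (Set.Ici_subset_Ici.mpr hr20)
    intro x hx
    rw [interior_Ici] at hx
    rw [factor hD]
    exact mul_pos (by linarith [Set.mem_Ioi.mp hx]) (by linarith [Set.mem_Ioi.mp hx])

/-- monotonicity of `q_{λ,z}` when `√λ > ε`. -/
theorem qfun_monotonicity_sqrt_gt (ε lam : ℝ) (hε : 0 < ε) (hlam : 0 < lam)
    (h : ε < Real.sqrt lam) :
    (∀ z ∈ Set.Icc (0 : ℝ) (2 * Real.sqrt lam - ε),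
      StrictMonoOn (qfun lam ε z) (Set.Ici 0)) ∧
    (∀ z ∈ Set.Icc (2 * Real.sqrt lam - ε) (lam / ε),
      StrictMonoOn (qfun lam ε z) (Set.Icc 0 (r1 lam ε z)) ∧
      StrictAntiOn (qfun lam ε z) (Set.Icc (r1 lam ε z) (r2 lam ε z)) ∧
      StrictMonoOn (qfun lam ε z) (Set.Ici (r2 lam ε z))) ∧
    (∀ z ∈ Set.Ici (lam / ε),
      StrictAntiOn (qfun lam ε z) (Set.Icc 0 (r2 lam ε z)) ∧
      StrictMonoOn (qfun lam ε z) (Set.Ici (r2 lam ε z))) := by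
  have hs0 : 0 < Real.sqrt lam := lt_trans hε h
  have hs2 : Real.sqrt lam ^ 2 = lam := Real.sq_sqrt hlam.le
  refine ⟨?_, fun z hz => part2_lemma hε hlam h hz.1 hz.2,
    fun z hz => part3_lemma hε hlam h hz⟩
  intro z hz
  rcases eq_or_lt_of_le hz.2 with heq | hlt
  · -- z = 2√λ − ε : glue the two increasing pieces from part2
    have hz2 : z ≤ lam / ε := by
      rw [le_div_iff₀ hε]
      nlinarith [sq_nonneg (Real.sqrt lam - ε)]
    obtain ⟨h1, _, h3⟩ := part2_lemma hε hlam h heq.ge hz2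
    have hD0 : (z + ε) ^ 2 / 4 - lam = 0 := by rw [heq]; nlinarith
    have hr : r1 lam ε z = r2 lam ε z := by
      unfold r1 r2
      rw [hD0, Real.sqrt_zero]
      ring
    have hr10 : 0 ≤ r1 lam ε z := by
      unfold r1
      rw [hD0, Real.sqrt_zero]
      have : ε < z := by linarith
      linarith
    exact strictMonoOn_glue hr10 h1 (hr ▸ h3)
  · -- z < 2√λ − ε : derivative positive everywhere on (0,∞)
    apply strictMonoOn_qfun hε hlam (convex_Ici _) (le_refl _)
    intro x hx
    rw [interior_Ici] at hx
    have hx0 : 0 < x := Set.mem_Ioi.mp hx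
    have hp1 : 0 < 2 * Real.sqrt lam - (z + ε) := by linarith
    have hp2 : 0 < 2 * Real.sqrt lam + (z + ε) := by linarith [hz.1]
    nlinarith [sq_nonneg (2 * x - z + ε), mul_pos hp1 hp2]
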